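/- Under the shared-Bernoulli coupling of Greedy and OPT with geometric usage durations, let H_t = {(P_{is})_{i∈[N]}, N_s, A_s, A*_s}_{s ≤ t} denote the history through time t, and let H_t be the set of histories h through time t−1 in which the event F_{i,t-1} occurs and F*_{i,t-1} does not (where F_{it} = {i ∉ I_t} ∪ {A_t = i} and F*_{it} = {i ∉ I*_t} ∪ {A*_t = i}). Then for any i with p_i > 0, any t, and any history h ∈ H_t: Pr(A*_t = i, A_t < i, H_{t-1} = h) = ((1 - p_i)/p_i) · Pr(A*_t = i, A_t = i, H_{t-1} = h). -/

import Mathlib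

open Finset

/-- An online policy for the online matching problem with reusable resources,
with `N` resources, `T` requests, and neighborhoods `Nbr`.  Upon arrival of
request `t`, the policy observes the time `t`, the set of currently available
resources, and the history of previously observed availability sets, and
matches the request to at most one available resource adjacent to `t`
(`none` means no match). -/
structure Policy (N T : ℕ) (Nbr : Fin T → Finset (Fin N)) where
  act : Fin T → Finset (Fin N) → List (Finset (Fin N)) → Option (Fin N)
  feasible : ∀ t I hist i, act t I hist = some i → i ∈ I ∩ Nbr t

/-- Sample space of the shared-Bernoulli coupling for geometric usage
durations: `ω i t` is the return flag `P_{it} ~ Bernoulli (p i)`.  A resource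
`i` that is unavailable returns at the start of time `t` iff `ω i t = true`;
this makes the usage duration of every match of `i` distributed as
`Geometric (p i)` on `{1, 2, ...}`. -/
abbrev Flags (N T : ℕ) := Fin N → Fin T → Bool

/-- One step of the dynamics at time `t`.  The state is the pair consisting of
the set of resources unavailable at the end of the previous step and the
history of observed availability sets. -/
def step {N T : ℕ} {Nbr : Fin T → Finset (Fin N)} (π : Policy N T Nbr)
    (ω : Flags N T) (s : Finset (Fin N) × List (Finset (Fin N))) (t : Fin T) :
    Finset (Fin N) × List (Finset (Fin N)) :=
  let busy := s.1.filter fun i => ω i t = false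
  let I : Finset (Fin N) := Finset.univ \ busy
  match π.act t I s.2 with
  | none => (busy, I :: s.2)
  | some i => (insert i busy, I :: s.2)

/-- The state just before step `n` (resources unavailable at the end of step
`n-1`, together with the observed history). -/
def stateUpTo {N T : ℕ} {Nbr : Fin T → Finset (Fin N)} (π : Policy N T Nbr)
    (ω : Flags N T) (n : ℕ) : Finset (Fin N) × List (Finset (Fin N)) :=
  ((List.finRange T).take n).foldl (step π ω) (∅, [])

/-- `I_t`: the set of resources available at time `t` under policy `π`. -/
def avail {N T : ℕ} {Nbr : Fin T → Finset (Fin N)} (π : Policy N T Nbr)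
    (ω : Flags N T) (t : Fin T) : Finset (Fin N) :=
  Finset.univ \ ((stateUpTo π ω t.val).1.filter fun i => ω i t = false)

/-- `A_t`: the resource matched at time `t` under policy `π` (`none` = no match). -/
def act {N T : ℕ} {Nbr : Fin T → Finset (Fin N)} (π : Policy N T Nbr)
    (ω : Flags N T) (t : Fin T) : Option (Fin N) :=
  π.act t (avail π ω t) (stateUpTo π ω t.val).2

/-- The total reward collected by policy `π` on the sample path `ω`. -/
def reward {N T : ℕ} {Nbr : Fin T → Finset (Fin N)} (r : Fin N → ℝ)
    (π : Policy N T Nbr) (ω : Flags N T) : ℝ :=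
  ∑ t : Fin T, (act π ω t).elim 0 r

/-- Probability of the flag configuration `ω` when `P_{it} ~ Bernoulli (p i)`
independently. -/
noncomputable def weight {N T : ℕ} (p : Fin N → ℝ) (ω : Flags N T) : ℝ :=
  ∏ i : Fin N, ∏ t : Fin T, if ω i t then p i else 1 - p i

/-- Expectation over the i.i.d. Bernoulli return flags. -/
noncomputable def expect {N T : ℕ} (p : Fin N → ℝ) (f : Flags N T → ℝ) : ℝ :=
  ∑ ω : Flags N T, weight p ω * f ω

/-- The greedy policy: match the available neighboring resource of largest
index (equivalently, of highest reward, since rewards are sorted). -/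
def greedy (N T : ℕ) (Nbr : Fin T → Finset (Fin N)) : Policy N T Nbr where
  act := fun t I _ => if h : (I ∩ Nbr t).Nonempty then some ((I ∩ Nbr t).max' h) else none
  feasible := by
    intro t I hist i hi
    by_cases h : (I ∩ Nbr t).Nonempty
    · rw [dif_pos h, Option.some.injEq] at hi
      exact hi ▸ Finset.max'_mem _ h
    · rw [dif_neg h] at hi
      exact absurd hi (by simp)

/-- `Greedy(I)`: the expected total reward of the greedy policy. -/
noncomputable def greedyVal (N T : ℕ) (Nbr : Fin T → Finset (Fin N))
    (r : Fin N → ℝ) (p : Fin N → ℝ) : ℝ :=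
  expect p (reward r (greedy N T Nbr))

/-- `OPT(I)`: the optimal expected total reward over all (clairvoyant)
policies; such a policy knows the whole instance, including the request
sequence, but observes returns only as they occur. -/
noncomputable def optVal (N T : ℕ) (Nbr : Fin T → Finset (Fin N))
    (r : Fin N → ℝ) (p : Fin N → ℝ) : ℝ :=
  ⨆ π : Policy N T Nbr, expect p (reward r π)

/-- The set of resources unavailable under `π` at the end of step `n - 1`
(equivalently, just before the returns at the start of step `n`).  For
`n = t + 1` membership `i ∈ busyEnd π ω (t+1)` is exactly the event
`F_{it} = {i ∉ I_t} ∪ {A_t = i}` of the paper: resource `i` was either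
unavailable at time `t` or matched at time `t`; for `n = 0` it is the empty
(always false) event, matching the convention that all resources start
available. -/
def busyEnd {N T : ℕ} {Nbr : Fin T → Finset (Fin N)} (π : Policy N T Nbr)
    (ω : Flags N T) (n : ℕ) : Finset (Fin N) :=
  (stateUpTo π ω n).1

/-- The event `A_t < i`: the policy matched a resource of strictly smaller
index than `i`, or made no match. -/
def matchedBelow {N T : ℕ} {Nbr : Fin T → Finset (Fin N)} (π : Policy N T Nbr)
    (ω : Flags N T) (t : Fin T) (i : Fin N) : Prop :=
  (act π ω t).elim True (fun j => j < i)

open scoped Classical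

/-- The event `H_{t-1} = h`: the sample path `ω` agrees with the reference
sample path `h` on all return flags `P_{is}` with `s ≤ t - 1`.  Since the
neighborhoods `N_s` are deterministic and the actions `A_s`, `A*_s` for
`s ≤ t - 1` are deterministic functions of these flags, this is exactly the
event that the history `{(P_{is})_i, N_s, A_s, A*_s}_{s ≤ t-1}` of both
coupled runs equals the one generated by `h`. -/
def prefixAgree {N T : ℕ} (ω h : Flags N T) (t : Fin T) : Prop :=
  ∀ (i : Fin N) (s : Fin T), s.val < t.val → ω i s = h i s

section Aux

variable {N T : ℕ} {Nbr : Fin T → Finset (Fin N)}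

lemma step_congr (π : Policy N T Nbr) {ω ω' : Flags N T} (t : Fin T)
    (hω : ∀ j, ω j t = ω' j t) (s : Finset (Fin N) × List (Finset (Fin N))) :
    step π ω s t = step π ω' s t := by
  have hf : (s.1.filter fun j => ω j t = false)
      = s.1.filter fun j => ω' j t = false := by
    apply Finset.filter_congr; intro j _; simp [hω j]
  simp only [step, hf]

lemma foldl_step_congr (π : Policy N T Nbr) {ω ω' : Flags N T}
    (l : List (Fin T)) (hl : ∀ t ∈ l, ∀ j, ω j t = ω' j t)
    (s : Finset (Fin N) × List (Finset (Fin N))) :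
    l.foldl (step π ω) s = l.foldl (step π ω') s := by
  induction l generalizing s with
  | nil => rfl
  | cons a l ih =>
    simp only [List.foldl_cons]
    rw [step_congr π a (hl a (by simp)) s]
    exact ih (fun t ht j => hl t (by simp [ht]) j) _

lemma mem_take_finRange {n : ℕ} {t : Fin T}
    (h : t ∈ (List.finRange T).take n) : t.val < n := by
  obtain ⟨k, hk, hget⟩ := List.mem_iff_getElem.mp h
  rw [List.length_take, List.length_finRange] at hk
  have hk' : k < n := lt_of_lt_of_le hk (min_le_left _ _)
  have hkT : k < T := lt_of_lt_of_le hk (min_le_right _ _)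
  rw [List.getElem_take] at hget
  have : t = ⟨k, hkT⟩ := by rw [← hget]; simp [List.getElem_finRange]
  simpa [this] using hk'

lemma stateUpTo_congr (π : Policy N T Nbr) {ω ω' : Flags N T} (n : ℕ)
    (hagree : ∀ (j : Fin N) (s : Fin T), s.val < n → ω j s = ω' j s) :
    stateUpTo π ω n = stateUpTo π ω' n :=
  foldl_step_congr π _ (fun s hs j => hagree j s (mem_take_finRange hs)) _

/-- Flip the `(i, t)` return flag. -/
def flipF {N T : ℕ} (i : Fin N) (t : Fin T) (ω : Flags N T) : Flags N T :=
  fun j s => if j = i ∧ s = t then !ω j s else ω j s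

lemma flipF_flipF (i : Fin N) (t : Fin T) (ω : Flags N T) :
    flipF i t (flipF i t ω) = ω := by
  funext j s
  by_cases hj : j = i ∧ s = t <;> simp [flipF, hj]

lemma flipF_ne (i : Fin N) (t : Fin T) (ω : Flags N T) {j : Fin N} {s : Fin T}
    (hjs : ¬(j = i ∧ s = t)) : flipF i t ω j s = ω j s := by
  simp [flipF, hjs]

lemma flipF_self (i : Fin N) (t : Fin T) (ω : Flags N T) :
    flipF i t ω i t = !ω i t := by simp [flipF]

lemma stateUpTo_flipF (π : Policy N T Nbr) (i : Fin N) (t : Fin T)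
    (ω : Flags N T) :
    stateUpTo π (flipF i t ω) t.val = stateUpTo π ω t.val := by
  apply stateUpTo_congr
  intro j s hs
  exact flipF_ne i t ω (by rintro ⟨-, rfl⟩; exact lt_irrefl _ hs)

lemma prefixAgree_flipF {i : Fin N} {t : Fin T} {ω h : Flags N T} :
    prefixAgree (flipF i t ω) h t ↔ prefixAgree ω h t := by
  have hne : ∀ (j : Fin N) (s : Fin T), s.val < t.val →
      flipF i t ω j s = ω j s := fun j s hs =>
    flipF_ne i t ω (by rintro ⟨-, rfl⟩; exact lt_irrefl _ hs)
  constructor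
  · intro hp j s hs; rw [← hne j s hs]; exact hp j s hs
  · intro hp j s hs; rw [hne j s hs]; exact hp j s hs

lemma weight_flipF (pv : Fin N → ℝ) (i : Fin N) (t : Fin T) (ω : Flags N T)
    (hω : ω i t = false) :
    pv i * weight pv ω = (1 - pv i) * weight pv (flipF i t ω) := by
  unfold weight
  rw [← Finset.mul_prod_erase _ _ (Finset.mem_univ i),
      ← Finset.mul_prod_erase _
        (fun j => ∏ s, if flipF i t ω j s then pv j else 1 - pv j)
        (Finset.mem_univ i)]
  have houter : ∀ j ∈ Finset.univ.erase i,
      (∏ s, if flipF i t ω j s then pv j else 1 - pv j)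
        = ∏ s, if ω j s then pv j else 1 - pv j := by
    intro j hj
    refine Finset.prod_congr rfl fun s _ => ?_
    rw [flipF_ne i t ω (by rintro ⟨rfl, -⟩; exact (Finset.mem_erase.mp hj).1 rfl)]
  rw [Finset.prod_congr rfl houter,
      ← Finset.mul_prod_erase _ (fun s => if ω i s then pv i else 1 - pv i)
        (Finset.mem_univ t),
      ← Finset.mul_prod_erase _
        (fun s => if flipF i t ω i s then pv i else 1 - pv i)
        (Finset.mem_univ t)]
  have hinner : ∀ s ∈ Finset.univ.erase t,
      (if flipF i t ω i s then pv i else 1 - pv i)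
        = if ω i s then pv i else 1 - pv i := by
    intro s hs
    rw [flipF_ne i t ω (by rintro ⟨-, rfl⟩; exact (Finset.mem_erase.mp hs).1 rfl)]
  rw [Finset.prod_congr rfl hinner, flipF_self, hω]
  norm_num
  ring

lemma act_flipF_of_not_busy (π : Policy N T Nbr) (i : Fin N) (t : Fin T)
    (ω : Flags N T) (hib : i ∉ (stateUpTo π ω t.val).1) :
    act π (flipF i t ω) t = act π ω t := by
  have hst := stateUpTo_flipF π i t ω
  have hav : avail π (flipF i t ω) t = avail π ω t := by
    unfold avail
    rw [hst]
    congr 1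
    apply Finset.filter_congr
    intro j hj
    have hji : j ≠ i := fun he => hib (he ▸ hj)
    rw [flipF_ne i t ω (by rintro ⟨rfl, -⟩; exact hji rfl)]
  unfold act
  rw [hst, hav]

lemma mem_avail_iff (ρ : Policy N T Nbr) {i : Fin N} {t : Fin T}
    {ω : Flags N T} (hib : i ∈ (stateUpTo ρ ω t.val).1) :
    i ∈ avail ρ ω t ↔ ω i t = true := by
  simp [avail, hib]

lemma avail_flipF_of_busy_false (ρ : Policy N T Nbr) (i : Fin N) (t : Fin T)
    (ω : Flags N T) (hib : i ∈ (stateUpTo ρ ω t.val).1) (hω : ω i t = false) :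
    avail ρ (flipF i t ω) t = insert i (avail ρ ω t) := by
  unfold avail
  rw [stateUpTo_flipF]
  ext j
  by_cases hj : j = i
  · subst hj
    simp [flipF_self, hω, hib]
  · have hfl : flipF i t ω j t = ω j t :=
      flipF_ne i t ω (by rintro ⟨rfl, -⟩; exact hj rfl)
    simp [hfl, hj]

lemma avail_flipF_of_busy_true (ρ : Policy N T Nbr) (i : Fin N) (t : Fin T)
    (ω : Flags N T) (hib : i ∈ (stateUpTo ρ ω t.val).1) (hω : ω i t = true) :
    avail ρ (flipF i t ω) t = (avail ρ ω t).erase i := by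
  unfold avail
  rw [stateUpTo_flipF]
  ext j
  by_cases hj : j = i
  · subst hj
    simp [flipF_self, hω, hib]
  · have hfl : flipF i t ω j t = ω j t :=
      flipF_ne i t ω (by rintro ⟨rfl, -⟩; exact hj rfl)
    simp [hfl, hj]

lemma act_greedy_eq (ω : Flags N T) (t : Fin T) :
    act (greedy N T Nbr) ω t =
      if hne : (avail (greedy N T Nbr) ω t ∩ Nbr t).Nonempty
      then some ((avail (greedy N T Nbr) ω t ∩ Nbr t).max' hne) else none := rfl

lemma greedy_not_matchedBelow {i : Fin N} {t : Fin T} {ω : Flags N T}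
    (hib : i ∈ (stateUpTo (greedy N T Nbr) ω t.val).1)
    (hiN : i ∈ Nbr t) (hω : ω i t = true) :
    ¬ matchedBelow (greedy N T Nbr) ω t i := by
  have hia : i ∈ avail (greedy N T Nbr) ω t :=
    (mem_avail_iff _ hib).mpr hω
  have hiS : i ∈ avail (greedy N T Nbr) ω t ∩ Nbr t :=
    Finset.mem_inter.mpr ⟨hia, hiN⟩
  have hne : (avail (greedy N T Nbr) ω t ∩ Nbr t).Nonempty := ⟨i, hiS⟩
  intro hM
  unfold matchedBelow at hM
  rw [act_greedy_eq, dif_pos hne] at hM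
  simp only [Option.elim_some] at hM
  exact absurd (Finset.le_max' _ i hiS) (not_le.mpr hM)

lemma greedy_flip_matches {i : Fin N} {t : Fin T} {ω : Flags N T}
    (hib : i ∈ (stateUpTo (greedy N T Nbr) ω t.val).1)
    (hiN : i ∈ Nbr t) (hω : ω i t = false)
    (hM : matchedBelow (greedy N T Nbr) ω t i) :
    act (greedy N T Nbr) (flipF i t ω) t = some i := by
  have hS' : avail (greedy N T Nbr) (flipF i t ω) t ∩ Nbr t
      = insert i (avail (greedy N T Nbr) ω t ∩ Nbr t) := by
    rw [avail_flipF_of_busy_false _ _ _ _ hib hω, Finset.insert_inter_of_mem hiN]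
  have hlt : ∀ x ∈ avail (greedy N T Nbr) ω t ∩ Nbr t, x < i := by
    intro x hx
    have hne : (avail (greedy N T Nbr) ω t ∩ Nbr t).Nonempty := ⟨x, hx⟩
    unfold matchedBelow at hM
    rw [act_greedy_eq, dif_pos hne] at hM
    simp only [Option.elim_some] at hM
    exact lt_of_le_of_lt (Finset.le_max' _ x hx) hM
  have hne' : (avail (greedy N T Nbr) (flipF i t ω) t ∩ Nbr t).Nonempty := by
    rw [hS']
    exact ⟨i, Finset.mem_insert_self _ _⟩
  rw [act_greedy_eq, dif_pos hne']
  congr 1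
  apply le_antisymm
  · apply Finset.max'_le
    intro y hy
    rw [hS'] at hy
    rcases Finset.mem_insert.mp hy with rfl | hy
    · exact le_refl _
    · exact (hlt y hy).le
  · exact Finset.le_max' _ i (by rw [hS']; exact Finset.mem_insert_self _ _)

lemma greedy_flip_below {i : Fin N} {t : Fin T} {ω : Flags N T}
    (hib : i ∈ (stateUpTo (greedy N T Nbr) ω t.val).1)
    (hGa : act (greedy N T Nbr) ω t = some i) :
    matchedBelow (greedy N T Nbr) (flipF i t ω) t i := by
  have hia : i ∈ avail (greedy N T Nbr) ω t ∩ Nbr t :=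
    (greedy N T Nbr).feasible t _ _ i hGa
  have hω : ω i t = true :=
    (mem_avail_iff _ hib).mp (Finset.mem_inter.mp hia).1
  have hS' : avail (greedy N T Nbr) (flipF i t ω) t ∩ Nbr t
      = (avail (greedy N T Nbr) ω t ∩ Nbr t).erase i := by
    rw [avail_flipF_of_busy_true _ _ _ _ hib hω, Finset.erase_inter]
  have hne : (avail (greedy N T Nbr) ω t ∩ Nbr t).Nonempty := ⟨i, hia⟩
  have hmax : (avail (greedy N T Nbr) ω t ∩ Nbr t).max' hne = i := by
    have h2 := hGa
    rw [act_greedy_eq, dif_pos hne] at h2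
    exact Option.some.inj h2
  unfold matchedBelow
  rw [act_greedy_eq]
  by_cases hne' : (avail (greedy N T Nbr) (flipF i t ω) t ∩ Nbr t).Nonempty
  · rw [dif_pos hne']
    simp only [Option.elim_some]
    have hmem : (avail (greedy N T Nbr) (flipF i t ω) t ∩ Nbr t).max' hne'
        ∈ (avail (greedy N T Nbr) ω t ∩ Nbr t).erase i := by
      rw [← hS']
      exact Finset.max'_mem _ hne'
    have hmemE := Finset.mem_erase.mp hmem
    have hle : (avail (greedy N T Nbr) (flipF i t ω) t ∩ Nbr t).max' hne' ≤ i :=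
      le_of_le_of_eq (Finset.le_max' _ _ hmemE.2) hmax
    exact lt_of_le_of_ne hle hmemE.1
  · rw [dif_neg hne']
    trivial

lemma sum_flip_pair {N T : ℕ} (pv : Fin N → ℝ) (i : Fin N) (hpi : 0 < pv i)
    (t : Fin T) (L R : Flags N T → Prop)
    (dL : ∀ ω, Decidable (L ω)) (dR : ∀ ω, Decidable (R ω))
    (hLR : ∀ ω, L ω → ω i t = false ∧ R (flipF i t ω))
    (hRL : ∀ ω, R ω → L (flipF i t ω)) :
    expect pv (fun ω => @ite ℝ (L ω) (dL ω) 1 0)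
      = (1 - pv i) / pv i * expect pv (fun ω => @ite ℝ (R ω) (dR ω) 1 0) := by
  classical
  unfold _root_.expect
  have step1 : ∀ ω : Flags N T,
      weight pv ω * (@ite ℝ (L ω) (dL ω) 1 0)
        = (1 - pv i) / pv i *
          (weight pv (flipF i t ω) * (@ite ℝ (R (flipF i t ω)) (dR (flipF i t ω)) 1 0)) := by
    intro ω
    by_cases hl : L ω
    · obtain ⟨hω, hr⟩ := hLR ω hl
      rw [if_pos hl, if_pos hr, mul_one, mul_one]
      have hw := weight_flipF pv i t ω hω
      field_simp
      linear_combination hw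
    · have hnr : ¬ R (flipF i t ω) := by
        intro hr
        have := hRL _ hr
        rw [flipF_flipF] at this
        exact hl this
      rw [if_neg hl, if_neg hnr, mul_zero, mul_zero, mul_zero]
  calc (∑ ω : Flags N T, weight pv ω * @ite ℝ (L ω) (dL ω) 1 0)
      = ∑ ω : Flags N T, (1 - pv i) / pv i *
          (weight pv (flipF i t ω) * @ite ℝ (R (flipF i t ω)) (dR (flipF i t ω)) 1 0) :=
        Finset.sum_congr rfl fun ω _ => step1 ω
    _ = (1 - pv i) / pv i * ∑ ω : Flags N T,
          weight pv (flipF i t ω) * (@ite ℝ (R (flipF i t ω)) (dR (flipF i t ω)) 1 0) := by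
        rw [Finset.mul_sum]
    _ = (1 - pv i) / pv i * ∑ ω : Flags N T,
          weight pv ω * (@ite ℝ (R ω) (dR ω) 1 0) := by
        congr 1
        exact Fintype.sum_bijective (flipF i t)
          (Function.Involutive.bijective (flipF_flipF i t)) _ _ (fun ω => rfl)

end Aux

/-- **The key conditional computation.**  Under the shared-Bernoulli coupling
of Greedy and any benchmark policy `π` (in particular the optimal clairvoyant
policy `OPT`) with geometric usage durations `F i = Geometric (pv i)`: for any
resource `i` with `pv i > 0`, any time `t`, and any history `h ∈ 𝓗_t`, i.e.
any sample path `h` on which the event `F_{i,t-1}` occurs and `F*_{i,t-1}`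
does not (resource `i` is unavailable under Greedy and available under `π` at
the end of time `t-1`),
`Pr(A*_t = i, A_t < i, H_{t-1} = h) = ((1 - p_i)/p_i) · Pr(A*_t = i, A_t = i, H_{t-1} = h)`. -/
theorem conditional_history_identity
    (N T : ℕ) (r : Fin N → ℝ) (hr0 : ∀ i, 0 ≤ r i) (hrmono : Monotone r)
    (Nbr : Fin T → Finset (Fin N))
    (pv : Fin N → ℝ) (hpv0 : ∀ i, 0 ≤ pv i) (hpv1 : ∀ i, pv i ≤ 1)
    (π : Policy N T Nbr) (i : Fin N) (hpi : 0 < pv i) (t : Fin T)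
    (h : Flags N T)
    (hhist : i ∈ busyEnd (greedy N T Nbr) h t.val ∧ i ∉ busyEnd π h t.val) :
    expect pv (fun ω =>
        if act π ω t = some i ∧ matchedBelow (greedy N T Nbr) ω t i ∧
            prefixAgree ω h t
        then 1 else 0)
      = ((1 - pv i) / pv i) *
        expect pv (fun ω =>
          if act π ω t = some i ∧ act (greedy N T Nbr) ω t = some i ∧
              prefixAgree ω h t
          then 1 else 0) := by
  classical
  obtain ⟨hbusyGh, hbusyπh⟩ := hhist
  apply sum_flip_pair pv i hpi t _ _ _ _
  · rintro ω ⟨hA, hM, hP⟩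
    have hstG : stateUpTo (greedy N T Nbr) ω t.val
        = stateUpTo (greedy N T Nbr) h t.val := stateUpTo_congr _ _ hP
    have hstπ : stateUpTo π ω t.val = stateUpTo π h t.val :=
      stateUpTo_congr _ _ hP
    have hbG : i ∈ (stateUpTo (greedy N T Nbr) ω t.val).1 := by
      rw [hstG]; exact hbusyGh
    have hbπ : i ∉ (stateUpTo π ω t.val).1 := by
      rw [hstπ]; exact hbusyπh
    have hiN : i ∈ Nbr t := (Finset.mem_inter.mp (π.feasible t _ _ i hA)).2
    have hω : ω i t = false := by
      by_contra hc
      exact greedy_not_matchedBelow hbG hiN (by simpa using hc) hM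
    refine ⟨hω, ?_, ?_, ?_⟩
    · rw [act_flipF_of_not_busy π i t ω hbπ]; exact hA
    · exact greedy_flip_matches hbG hiN hω hM
    · exact prefixAgree_flipF.mpr hP
  · rintro ω ⟨hA, hGa, hP⟩
    have hstG : stateUpTo (greedy N T Nbr) ω t.val
        = stateUpTo (greedy N T Nbr) h t.val := stateUpTo_congr _ _ hP
    have hstπ : stateUpTo π ω t.val = stateUpTo π h t.val :=
      stateUpTo_congr _ _ hP
    have hbG : i ∈ (stateUpTo (greedy N T Nbr) ω t.val).1 := by
      rw [hstG]; exact hbusyGh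
    have hbπ : i ∉ (stateUpTo π ω t.val).1 := by
      rw [hstπ]; exact hbusyπh
    refine ⟨?_, ?_, ?_⟩
    · rw [act_flipF_of_not_busy π i t ω hbπ]; exact hA
    · exact greedy_flip_below hbG hGa
    · exact prefixAgree_flipF.mpr hP
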